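/- arXiv:1312.6917 — 9 statements merged into one kernel-verified Lean document; each statement's English description precedes it below -/
import Mathlib

section
/- Every quandle of cyclic type is two-point homogeneous: for any pairs (x₁,x₂) and (y₁,y₂) of distinct points, there exists f ∈ Inn(X,s) with f(x₁)=y₁ and f(x₂)=y₂. -/
/-- every quandle of cyclic type is two-point homogeneous. -/
theorem stmt_5 {X : Type*} [Fintype X] [DecidableEq X]
    (hn : 3 ≤ Fintype.card X)
    (s : X → Equiv.Perm X)
    (hS1 : ∀ x : X, s x x = x)
    (hS3 : ∀ x y : X, s x * s y = s (s x y) * s x)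
    (hcyc : ∀ x : X, (s x).IsCycle ∧ (s x).support = ({x}ᶜ : Finset X)) :
    ∀ x₁ x₂ y₁ y₂ : X, x₁ ≠ x₂ → y₁ ≠ y₂ →
      ∃ f ∈ Subgroup.closure (Set.range s), f x₁ = y₁ ∧ f x₂ = y₂ := by
  intro x₁ x₂ y₁ y₂ hx hy
  have hfix : ∀ c : X, ∀ k : ℕ, ((s c) ^ k) c = c := by
    intro c k
    induction k with
    | zero => simp
    | succ n ih => rw [pow_succ, Equiv.Perm.mul_apply, hS1, ih]
  have hmem : ∀ c : X, ∀ k : ℕ, (s c) ^ k ∈ Subgroup.closure (Set.range s) :=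
    fun c k => pow_mem (Subgroup.subset_closure (Set.mem_range_self c)) k
  have hmove : ∀ a b c : X, a ≠ c → b ≠ c → ∃ k : ℕ, ((s c) ^ k) a = b := by
    intro a b c ha hb
    obtain ⟨hc, hsupp⟩ := hcyc c
    refine hc.exists_pow_eq ?_ ?_
    · have : a ∈ (s c).support := by rw [hsupp]; simpa using ha
      exact Equiv.Perm.mem_support.mp this
    · have : b ∈ (s c).support := by rw [hsupp]; simpa using hb
      exact Equiv.Perm.mem_support.mp this
  obtain ⟨g, hg, hg1⟩ : ∃ g ∈ Subgroup.closure (Set.range s), g x₁ = y₁ := by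
    by_cases h : x₁ = y₁
    · exact ⟨1, one_mem _, h⟩
    · have hne : (({x₁, y₁}ᶜ : Finset X)).Nonempty := by
        rw [← Finset.card_pos, Finset.card_compl]
        have h2 : ({x₁, y₁} : Finset X).card ≤ 2 := by
          apply le_trans (Finset.card_insert_le _ _); simp
        omega
      obtain ⟨c, hc⟩ := hne
      simp only [Finset.mem_compl, Finset.mem_insert, Finset.mem_singleton, not_or] at hc
      obtain ⟨k, hk⟩ := hmove x₁ y₁ c (fun h' => hc.1 h'.symm) (fun h' => hc.2 h'.symm)
      exact ⟨(s c) ^ k, hmem c k, hk⟩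
  have hz : g x₂ ≠ y₁ := by
    intro h
    exact hx (g.injective (by rw [hg1, h]))
  obtain ⟨m, hm⟩ := hmove (g x₂) y₂ y₁ hz hy.symm
  refine ⟨(s y₁) ^ m * g, mul_mem (hmem y₁ m) hg, ?_, ?_⟩
  · rw [Equiv.Perm.mul_apply, hg1, hfix]
  · rw [Equiv.Perm.mul_apply, hm]
end

section
/- A finite quandle (X,s) with |X| = n ≥ 3 is of cyclic type if and only if (i) X is connected, and (ii) there exists some x ∈ X such that s_x acts on X \ {x} as a cyclic permutation of order n−1. -/
/-- a finite quandle with `card X = n ≥ 3` is of cyclic type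
(every `s x` is an (n−1)-cycle on the complement of `{x}`) iff it is connected
and some `s x` is an (n−1)-cycle on the complement of `{x}`. -/
theorem stmt_6 {X : Type*} [Fintype X] [DecidableEq X]
    (hn : 3 ≤ Fintype.card X)
    (s : X → Equiv.Perm X)
    (hS1 : ∀ x : X, s x x = x)
    (hS3 : ∀ x y : X, s x * s y = s (s x y) * s x) :
    (∀ x : X, (s x).IsCycle ∧ (s x).support = ({x}ᶜ : Finset X)) ↔
      ((∀ a b : X, ∃ g ∈ Subgroup.closure (Set.range s), g a = b) ∧
       ∃ x : X, (s x).IsCycle ∧ (s x).support = ({x}ᶜ : Finset X)) := by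
  have conj : ∀ g ∈ Subgroup.closure (Set.range s), ∀ y, g * s y * g⁻¹ = s (g y) := by
    intro g hg
    induction hg using Subgroup.closure_induction with
    | mem a ha =>
      obtain ⟨x, rfl⟩ := ha
      intro y
      have h := hS3 x y
      rw [eq_comm, eq_mul_inv_iff_mul_eq, h]
    | one => intro y; simp
    | mul a b _ _ pa pb =>
      intro y
      have : a * b * s y * (a * b)⁻¹ = a * (b * s y * b⁻¹) * a⁻¹ := by group
      rw [this, pb y, pa (b y)]
      simp [Equiv.Perm.mul_apply]
    | inv a _ pa =>
      intro y
      have h := pa (a⁻¹ y)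
      simp only [show a (a⁻¹ y) = y from a.apply_symm_apply y] at h
      rw [← h]; group
  constructor
  · intro h
    have : Nonempty X := Fintype.card_pos_iff.mp (by omega)
    refine ⟨?_, ⟨Classical.arbitrary X, h _⟩⟩
    intro a b
    -- find c ≠ a, c ≠ b
    have : ∃ c, c ∉ ({a, b} : Finset X) := by
      by_contra hc
      push_neg at hc
      have : (Finset.univ : Finset X) ⊆ {a, b} := fun c _ => hc c
      have := Finset.card_le_card this
      simp only [Finset.card_univ] at this
      have h2 : ({a, b} : Finset X).card ≤ 2 := Finset.card_insert_le _ _ |>.trans (by simp)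
      omega
    obtain ⟨c, hc⟩ := this
    simp only [Finset.mem_insert, Finset.mem_singleton, not_or] at hc
    obtain ⟨hcyc, hsupp⟩ := h c
    have ha : s c a ≠ a := by
      rw [← Equiv.Perm.mem_support, hsupp]; simpa using fun h => hc.1 h.symm
    have hb : s c b ≠ b := by
      rw [← Equiv.Perm.mem_support, hsupp]; simpa using fun h => hc.2 h.symm
    obtain ⟨i, hi⟩ := hcyc.exists_pow_eq ha hb
    refine ⟨(s c) ^ i, ?_, hi⟩
    exact Subgroup.pow_mem _ (Subgroup.subset_closure (Set.mem_range_self c)) i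
  · rintro ⟨htrans, x, hcyc, hsupp⟩ z
    obtain ⟨g, hg, hgx⟩ := htrans x z
    have h1 : s z = g * s x * g⁻¹ := by rw [← hgx, ← conj g hg x]
    refine ⟨h1 ▸ hcyc.conj, ?_⟩
    rw [h1, Equiv.Perm.support_conj, hsupp]
    ext y
    simp only [Finset.mem_map, Finset.mem_compl, Finset.mem_singleton,
      Equiv.toEmbedding_apply]
    constructor
    · rintro ⟨w, hw, rfl⟩ h
      exact hw (by rw [← hgx] at h; exact g.injective h)
    · intro hy
      exact ⟨g⁻¹ y, fun h => hy (by rw [← hgx, ← h]; simp), by simp⟩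
end

section
/- The dihedral quandle on Z/nZ (n ≥ 3) is of cyclic type if and only if n = 3. -/
/-- The dihedral quandle structure on `ZMod n`: `s i = (j ↦ 2*i - j)`. -/
def dihedralPerm (n : ℕ) (i : ZMod n) : Equiv.Perm (ZMod n) :=
  Equiv.subLeft (2 * i)

lemma dihedral_sq (n : ℕ) (i : ZMod n) : (dihedralPerm n i) ^ 2 = 1 := by
  ext j
  simp [dihedralPerm, pow_succ, Equiv.subLeft]

lemma dihedral_swap_aux : ∀ i j : ZMod 3,
    dihedralPerm 3 i j = Equiv.swap (i + 1) (i + 2) j := by decide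

lemma compl_aux : ∀ i x : ZMod 3,
    x ∈ ({i + 1, i + 2} : Finset (ZMod 3)) ↔ x ∈ ({i}ᶜ : Finset (ZMod 3)) := by decide

/-- the dihedral quandle on `ZMod n` (n ≥ 3) is of cyclic type
iff `n = 3`. -/
theorem stmt_7 (n : ℕ) [NeZero n] (hn : 3 ≤ n) :
    (∀ i : ZMod n, (dihedralPerm n i).IsCycle ∧
      (dihedralPerm n i).support = ({i}ᶜ : Finset (ZMod n))) ↔ n = 3 := by
  constructor
  · intro h
    obtain ⟨hc, hs⟩ := h 0
    have hord : orderOf (dihedralPerm n 0) = (dihedralPerm n 0).support.card :=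
      hc.orderOf
    have hcard : (dihedralPerm n 0).support.card = n - 1 := by
      rw [hs]
      rw [Finset.card_compl, Finset.card_singleton]
      simp [ZMod.card]
    have hdvd : orderOf (dihedralPerm n 0) ∣ 2 :=
      orderOf_dvd_of_pow_eq_one (dihedral_sq n 0)
    rw [hord, hcard] at hdvd
    have := Nat.le_of_dvd (by norm_num) hdvd
    omega
  · intro h
    subst h
    intro i
    have hne : i + 1 ≠ i + 2 := by
      intro h
      exact absurd (add_left_cancel h) (by decide)
    have hswap : dihedralPerm 3 i = Equiv.swap (i + 1) (i + 2) := by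
      exact Equiv.ext (dihedral_swap_aux i)
    rw [hswap]
    refine ⟨Equiv.Perm.isCycle_swap hne, ?_⟩
    rw [Equiv.Perm.support_swap hne]
    exact Finset.ext (compl_aux i)
end

section
/- Let Σ ⊆ (S_n)_{n−1} satisfy (D1) s⁻¹Σs ⊆ Σ for all s ∈ Σ and (D2) for every x ∈ {1,…,n} there is a unique element s^Σ_x ∈ Σ with s^Σ_x(x) = x. Then x ↦ s^Σ_x is a quandle structure of cyclic type on {1,…,n}: it satisfies s^Σ_x(x)=x and s^Σ_z ∘ s^Σ_y ∘ (s^Σ_z)⁻¹ = s^Σ_{s^Σ_z(y)} for all y, z. -/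
/-- if `S ⊆ (S_n)_{n−1}` satisfies (D1) and (D2), then the map
`x ↦ s^S_x` (the unique element of `S` fixing `x`) is a quandle structure of
cyclic type on `Fin n`. -/
theorem stmt_9 (n : ℕ) (hn : 3 ≤ n) (S : Set (Equiv.Perm (Fin n)))
    (hScyc : ∀ σ ∈ S, σ.IsCycle ∧ σ.support.card = n - 1)
    (hD1 : ∀ σ ∈ S, ∀ τ ∈ S, σ⁻¹ * τ * σ ∈ S)
    (hD2 : ∀ x : Fin n, ∃! σ : Equiv.Perm (Fin n), σ ∈ S ∧ σ x = x)
    (f : Fin n → Equiv.Perm (Fin n))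
    (hf : ∀ x : Fin n, f x ∈ S ∧ f x x = x) :
    (∀ x : Fin n, f x x = x) ∧
    (∀ y z : Fin n, f z * f y * (f z)⁻¹ = f (f z y)) ∧
    (∀ x : Fin n, (f x).IsCycle ∧ (f x).support.card = n - 1) := by
  -- iterated D1: conjugation by powers
  have hpow : ∀ (k : ℕ) (σ : Equiv.Perm (Fin n)), σ ∈ S → ∀ τ ∈ S,
      (σ⁻¹) ^ k * τ * σ ^ k ∈ S := by
    intro k
    induction k with
    | zero => intro σ _ τ hτ; simpa using hτ
    | succ k ih =>
      intro σ hσ τ hτ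
      have h1 := ih σ hσ τ hτ
      have h2 := hD1 σ hσ _ h1
      have : σ⁻¹ * ((σ⁻¹) ^ k * τ * σ ^ k) * σ = (σ⁻¹) ^ (k+1) * τ * σ ^ (k+1) := by
        group
      rwa [this] at h2
  refine ⟨fun x => (hf x).2, ?_, fun x => hScyc _ (hf x).1⟩
  intro y z
  set σ := f z with hσdef
  have hσS : σ ∈ S := (hf z).1
  have hτS : f y ∈ S := (hf y).1
  have hord : orderOf σ = n - 1 := by
    rw [(hScyc σ hσS).1.orderOf, (hScyc σ hσS).2]
  have hσ1 : σ ^ (n - 1) = 1 := by rw [← hord]; exact pow_orderOf_eq_one σ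
  -- express conjugation the other way using σ^(n-1)=1
  have key : σ * f y * σ⁻¹ = (σ⁻¹) ^ (n - 2) * f y * σ ^ (n - 2) := by
    have h1 : σ ^ (n - 2) = σ⁻¹ := by
      have : σ ^ (n - 2) * σ = 1 := by
        rw [← pow_succ]
        have : n - 2 + 1 = n - 1 := by omega
        rw [this, hσ1]
      exact (eq_inv_iff_mul_eq_one).mpr this
    have h2 : (σ⁻¹) ^ (n - 2) = σ := by
      rw [inv_pow, h1, inv_inv]
    rw [h1, h2]
  have hmem : σ * f y * σ⁻¹ ∈ S := by
    rw [key]; exact hpow (n - 2) σ hσS (f y) hτS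
  have hfix : (σ * f y * σ⁻¹) (σ y) = σ y := by
    simp [Equiv.Perm.mul_apply, (hf y).2]
  obtain ⟨g, hg, hguniq⟩ := hD2 (σ y)
  have e1 := hguniq _ ⟨hmem, hfix⟩
  have e2 := hguniq _ ⟨(hf (σ y)).1, (hf (σ y)).2⟩
  rw [e1, ← e2]
end

section
/- Every quandle structure of cyclic type s on X = {1,…,n} arises from a subset Σ ⊆ (S_n)_{n−1} satisfying (D1) and (D2): namely, Σ := {s_x : x ∈ X} satisfies (D1) s⁻¹Σs ⊆ Σ for all s ∈ Σ, (D2) each x ∈ X is fixed by a unique element of Σ, and the induced quandle structure s^Σ equals s. -/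
/-- every quandle structure of cyclic type `s` on `Fin n` arises
from `Σ := range s`: this set satisfies (D1) and (D2), and the induced quandle
structure (unique fixing element) equals `s`. -/
theorem stmt_10 (n : ℕ) (hn : 3 ≤ n) (s : Fin n → Equiv.Perm (Fin n))
    (hS1 : ∀ x : Fin n, s x x = x)
    (hS3 : ∀ x y : Fin n, s x * s y * (s x)⁻¹ = s (s x y))
    (hcyc : ∀ x : Fin n, (s x).IsCycle ∧ (s x).support.card = n - 1) :
    (∀ σ ∈ Set.range s, ∀ τ ∈ Set.range s, σ⁻¹ * τ * σ ∈ Set.range s) ∧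
    (∀ x : Fin n, ∃! σ : Equiv.Perm (Fin n), σ ∈ Set.range s ∧ σ x = x) ∧
    (∀ x : Fin n, ∀ σ ∈ Set.range s, σ x = x → σ = s x) := by
  have key : ∀ x y : Fin n, s y x = x → y = x := by
    intro x y hx
    have hxn : x ∉ (s y).support := Equiv.Perm.notMem_support.mpr hx
    have hyn : y ∉ (s y).support := Equiv.Perm.notMem_support.mpr (hS1 y)
    have hcard : ((s y).support)ᶜ.card = 1 := by
      have h2 := (hcyc y).2
      rw [Finset.card_compl, h2, Fintype.card_fin]
      omega
    exact Finset.card_le_one.mp (le_of_eq hcard) y (Finset.mem_compl.mpr hyn)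
      x (Finset.mem_compl.mpr hxn)
  refine ⟨?_, ?_, ?_⟩
  · rintro σ ⟨x, rfl⟩ τ ⟨y, rfl⟩
    refine ⟨(s x)⁻¹ y, ?_⟩
    have h := hS3 x ((s x)⁻¹ y)
    rw [show (s x) ((s x)⁻¹ y) = y from (s x).apply_symm_apply y] at h
    rw [← h]
    group
  · intro x
    refine ⟨s x, ⟨⟨x, rfl⟩, hS1 x⟩, ?_⟩
    rintro σ ⟨⟨y, rfl⟩, hfix⟩
    rw [key x y hfix]
  · rintro x σ ⟨y, rfl⟩ hfix
    rw [key x y hfix]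
end

section
/- Let u₁, u₂ be (n−1)-cycles in S_n with u₁(1)=1, u₂(2)=2, and suppose {u₁^m u₂ u₁^{−m} : m = 1,…,n−2} = {u₂^m u₁ u₂^{−m} : m = 1,…,n−2}. Then the set Σ := {u₁, u₂} ∪ {u₁^m u₂ u₁^{−m} : m = 1,…,n−2} satisfies (D1) s⁻¹Σs ⊆ Σ for all s ∈ Σ, and (D2) every x ∈ {1,…,n} is fixed by a unique element of Σ. -/
/-- if `u₁, u₂` are (n−1)-cycles in `S_n` with `u₁` fixing the
first point and `u₂` the second (points of `{1,…,n}` are labelled by `Fin n`,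
so these are `0` and `1`), satisfying condition (E2), then
`Σ := {u₁, u₂} ∪ {u₁^m u₂ u₁^{−m} : m = 1,…,n−2}` satisfies (D1) and (D2). -/
theorem stmt_13 (n : ℕ) [NeZero n] (hn : 3 ≤ n)
    (u₁ u₂ : Equiv.Perm (Fin n))
    (h1c : u₁.IsCycle) (h1card : u₁.support.card = n - 1)
    (h2c : u₂.IsCycle) (h2card : u₂.support.card = n - 1)
    (h1 : u₁ 0 = 0) (h2 : u₂ 1 = 1)
    (hE2 : {σ : Equiv.Perm (Fin n) | ∃ m ∈ Finset.Icc 1 (n - 2), σ = u₁ ^ m * u₂ * (u₁ ^ m)⁻¹}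
         = {σ : Equiv.Perm (Fin n) | ∃ m ∈ Finset.Icc 1 (n - 2), σ = u₂ ^ m * u₁ * (u₂ ^ m)⁻¹})
    (S : Set (Equiv.Perm (Fin n)))
    (hS : S = {u₁, u₂} ∪
      {σ : Equiv.Perm (Fin n) | ∃ m ∈ Finset.Icc 1 (n - 2), σ = u₁ ^ m * u₂ * (u₁ ^ m)⁻¹}) :
    (∀ σ ∈ S, ∀ τ ∈ S, σ⁻¹ * τ * σ ∈ S) ∧
    (∀ x : Fin n, ∃! σ : Equiv.Perm (Fin n), σ ∈ S ∧ σ x = x) := by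
  have hne01 : (0 : Fin n) ≠ 1 := by
    have hv : ((1 : Fin n) : ℕ) = 1 := (Fin.val_one' n).trans (Nat.mod_eq_of_lt (by omega))
    intro h; rw [Fin.ext_iff, hv] at h; simp at h
  -- membership characterization
  have hmemS : ∀ σ : Equiv.Perm (Fin n), σ ∈ S ↔
      (σ = u₁ ∨ σ = u₂ ∨ ∃ m, (1 ≤ m ∧ m ≤ n - 2) ∧ σ = u₁ ^ m * u₂ * (u₁ ^ m)⁻¹) := by
    intro σ
    rw [hS]
    simp only [Set.mem_union, Set.mem_insert_iff, Set.mem_singleton_iff, Set.mem_setOf_eq,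
      Finset.mem_Icc, or_assoc]
  have hE2' : ∀ σ : Equiv.Perm (Fin n),
      (∃ m, (1 ≤ m ∧ m ≤ n - 2) ∧ σ = u₁ ^ m * u₂ * (u₁ ^ m)⁻¹) ↔
      (∃ k, (1 ≤ k ∧ k ≤ n - 2) ∧ σ = u₂ ^ k * u₁ * (u₂ ^ k)⁻¹) := by
    intro σ
    have := Set.ext_iff.mp hE2 σ
    simpa only [Set.mem_setOf_eq, Finset.mem_Icc] using this
  -- supports
  have hsupp1 : u₁.support = Finset.univ.erase 0 := by
    apply Finset.eq_of_subset_of_card_le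
    · intro x hx
      rw [Finset.mem_erase]
      refine ⟨?_, Finset.mem_univ _⟩
      rintro rfl
      exact (Equiv.Perm.mem_support.mp hx) h1
    · rw [Finset.card_erase_of_mem (Finset.mem_univ _), Finset.card_univ, Fintype.card_fin, h1card]
  have hsupp2 : u₂.support = Finset.univ.erase 1 := by
    apply Finset.eq_of_subset_of_card_le
    · intro x hx
      rw [Finset.mem_erase]
      refine ⟨?_, Finset.mem_univ _⟩
      rintro rfl
      exact (Equiv.Perm.mem_support.mp hx) h2
    · rw [Finset.card_erase_of_mem (Finset.mem_univ _), Finset.card_univ, Fintype.card_fin, h2card]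
  have fix1 : ∀ x : Fin n, u₁ x = x ↔ x = 0 := by
    intro x
    rw [← Equiv.Perm.notMem_support, hsupp1]
    simp
  have fix2 : ∀ x : Fin n, u₂ x = x ↔ x = 1 := by
    intro x
    rw [← Equiv.Perm.notMem_support, hsupp2]
    simp
  have hmem1 : (1 : Fin n) ∈ u₁.support := by
    rw [hsupp1, Finset.mem_erase]; exact ⟨hne01.symm, Finset.mem_univ _⟩
  -- orders
  have hord1 : u₁ ^ (n - 1) = 1 := by
    have h : orderOf u₁ = n - 1 := by rw [h1c.orderOf, h1card]
    rw [← h]; exact pow_orderOf_eq_one u₁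
  have hord2 : u₂ ^ (n - 1) = 1 := by
    have h : orderOf u₂ = n - 1 := by rw [h2c.orderOf, h2card]
    rw [← h]; exact pow_orderOf_eq_one u₂
  -- cycle-on support
  have hco1 : u₁.IsCycleOn (u₁.support : Set (Fin n)) := by
    rw [Equiv.Perm.coe_support_eq_set_support]; exact h1c.isCycleOn
  have hpow1 : ∀ m : ℕ, (u₁ ^ m) 1 = 1 ↔ (n - 1) ∣ m := by
    intro m
    rw [← h1card]
    exact hco1.pow_apply_eq hmem1
  have hpp : ∀ m k : ℕ, (u₁ ^ m) 1 = (u₁ ^ k) 1 ↔ m ≡ k [MOD n - 1] := by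
    intro m k
    have := hco1.pow_apply_eq_pow_apply hmem1 (m := m) (n := k)
    rwa [h1card] at this
  have hp0 : ∀ m : ℕ, (u₁ ^ m) 1 ≠ 0 := by
    intro m h
    have h0 : (u₁ ^ m) 0 = 0 := Equiv.Perm.pow_apply_eq_self_of_apply_eq_self h1 m
    rw [← h0] at h
    exact hne01 ((u₁ ^ m).injective h).symm
  -- fixed points of conjugates
  have fixc : ∀ (m : ℕ) (x : Fin n),
      (u₁ ^ m * u₂ * (u₁ ^ m)⁻¹) x = x ↔ x = (u₁ ^ m) 1 := by
    intro m x
    simp only [Equiv.Perm.mul_apply]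
    constructor
    · intro h
      have h' : u₂ ((u₁ ^ m)⁻¹ x) = (u₁ ^ m)⁻¹ x := by
        apply (u₁ ^ m).injective
        simpa using h
      rw [fix2] at h'
      have := congrArg (u₁ ^ m) h'
      simpa using this
    · rintro rfl
      simp [h2]
  -- conjugation lemmas
  have conjR1 : ∀ t ∈ S, u₁ * t * u₁⁻¹ ∈ S := by
    intro t ht
    rcases (hmemS t).mp ht with rfl | rfl | ⟨m, ⟨hm1, hm2⟩, rfl⟩
    · exact (hmemS _).mpr (Or.inl (by group))
    · exact (hmemS _).mpr (Or.inr (Or.inr ⟨1, ⟨le_refl 1, by omega⟩, by simp⟩))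
    · rcases eq_or_lt_of_le hm2 with heq | hlt
      · apply (hmemS _).mpr; right; left
        have hh : u₁ * u₁ ^ m = 1 := by
          rw [← pow_succ']
          have hmm : m + 1 = n - 1 := by omega
          rw [hmm, hord1]
        calc u₁ * (u₁ ^ m * u₂ * (u₁ ^ m)⁻¹) * u₁⁻¹
            = (u₁ * u₁ ^ m) * u₂ * (u₁ * u₁ ^ m)⁻¹ := by
              simp [mul_inv_rev, mul_assoc]
          _ = u₂ := by rw [hh]; simp
      · exact (hmemS _).mpr (Or.inr (Or.inr ⟨m + 1, ⟨by omega, by omega⟩,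
          by simp [pow_succ', mul_inv_rev, mul_assoc]⟩))
  have conjL1 : ∀ t ∈ S, u₁⁻¹ * t * u₁ ∈ S := by
    intro t ht
    rcases (hmemS t).mp ht with rfl | rfl | ⟨m, ⟨hm1, hm2⟩, rfl⟩
    · exact (hmemS _).mpr (Or.inl (by group))
    · apply (hmemS _).mpr; right; right
      have hinv : u₁ ^ (n - 2) = u₁⁻¹ := by
        apply eq_inv_of_mul_eq_one_left
        rw [← pow_succ]
        have hmm : n - 2 + 1 = n - 1 := by omega
        rw [hmm, hord1]
      exact ⟨n - 2, ⟨by omega, le_refl _⟩, by rw [hinv]; simp⟩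
    · rcases Nat.exists_eq_add_of_le hm1 with ⟨k, rfl⟩
      by_cases hk : k = 0
      · subst hk
        apply (hmemS _).mpr; right; left
        simpa using (by simp [pow_succ', mul_inv_rev, mul_assoc] :
          u₁⁻¹ * (u₁ ^ (0 + 1) * u₂ * (u₁ ^ (0 + 1))⁻¹) * u₁ = u₁ ^ 0 * u₂ * (u₁ ^ 0)⁻¹)
      · apply (hmemS _).mpr; right; right
        refine ⟨k, ⟨by omega, by omega⟩, ?_⟩
        have : 1 + k = k + 1 := by omega
        rw [this]
        simp [pow_succ', mul_inv_rev, mul_assoc]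
  have conjR2 : ∀ t ∈ S, u₂ * t * u₂⁻¹ ∈ S := by
    intro t ht
    rcases (hmemS t).mp ht with rfl | rfl | ⟨m, hm, rfl⟩
    · apply (hmemS _).mpr; right; right
      exact (hE2' _).mpr ⟨1, ⟨le_refl 1, by omega⟩, by simp⟩
    · exact (hmemS _).mpr (Or.inr (Or.inl (by group)))
    · obtain ⟨k, ⟨hk1, hk2⟩, hk⟩ := (hE2' _).mp ⟨m, hm, rfl⟩
      rw [hk]
      rcases eq_or_lt_of_le hk2 with heq | hlt
      · apply (hmemS _).mpr; left
        have hh : u₂ * u₂ ^ k = 1 := by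
          rw [← pow_succ']
          have hmm : k + 1 = n - 1 := by omega
          rw [hmm, hord2]
        calc u₂ * (u₂ ^ k * u₁ * (u₂ ^ k)⁻¹) * u₂⁻¹
            = (u₂ * u₂ ^ k) * u₁ * (u₂ * u₂ ^ k)⁻¹ := by
              simp [mul_inv_rev, mul_assoc]
          _ = u₁ := by rw [hh]; simp
      · apply (hmemS _).mpr; right; right
        exact (hE2' _).mpr ⟨k + 1, ⟨by omega, by omega⟩,
          by simp [pow_succ', mul_inv_rev, mul_assoc]⟩
  have conjL2 : ∀ t ∈ S, u₂⁻¹ * t * u₂ ∈ S := by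
    intro t ht
    rcases (hmemS t).mp ht with rfl | rfl | ⟨m, hm, rfl⟩
    · apply (hmemS _).mpr; right; right
      have hinv : u₂ ^ (n - 2) = u₂⁻¹ := by
        apply eq_inv_of_mul_eq_one_left
        rw [← pow_succ]
        have hmm : n - 2 + 1 = n - 1 := by omega
        rw [hmm, hord2]
      exact (hE2' _).mpr ⟨n - 2, ⟨by omega, le_refl _⟩, by rw [hinv]; simp⟩
    · exact (hmemS _).mpr (Or.inr (Or.inl (by group)))
    · obtain ⟨k, ⟨hk1, hk2⟩, hk⟩ := (hE2' _).mp ⟨m, hm, rfl⟩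
      rw [hk]
      rcases Nat.exists_eq_add_of_le hk1 with ⟨j, rfl⟩
      by_cases hj : j = 0
      · subst hj
        apply (hmemS _).mpr; left
        simpa using (by simp [pow_succ', mul_inv_rev, mul_assoc] :
          u₂⁻¹ * (u₂ ^ (0 + 1) * u₁ * (u₂ ^ (0 + 1))⁻¹) * u₂ = u₂ ^ 0 * u₁ * (u₂ ^ 0)⁻¹)
      · apply (hmemS _).mpr; right; right
        apply (hE2' _).mpr
        refine ⟨j, ⟨by omega, by omega⟩, ?_⟩
        have : 1 + j = j + 1 := by omega
        rw [this]
        simp [pow_succ', mul_inv_rev, mul_assoc]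
  have conjpowR : ∀ (m : ℕ), ∀ t ∈ S, u₁ ^ m * t * (u₁ ^ m)⁻¹ ∈ S := by
    intro m
    induction m with
    | zero => intro t ht; simpa using ht
    | succ k ih =>
      intro t ht
      have h' := conjR1 _ (ih t ht)
      have heq : u₁ * (u₁ ^ k * t * (u₁ ^ k)⁻¹) * u₁⁻¹ = u₁ ^ (k + 1) * t * (u₁ ^ (k + 1))⁻¹ := by
        simp [pow_succ', mul_inv_rev, mul_assoc]
      rwa [heq] at h'
  have conjpowL : ∀ (m : ℕ), ∀ t ∈ S, (u₁ ^ m)⁻¹ * t * u₁ ^ m ∈ S := by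
    intro m
    induction m with
    | zero => intro t ht; simpa using ht
    | succ k ih =>
      intro t ht
      have h' := ih _ (conjL1 t ht)
      have heq : (u₁ ^ k)⁻¹ * (u₁⁻¹ * t * u₁) * u₁ ^ k
          = (u₁ ^ (k + 1))⁻¹ * t * u₁ ^ (k + 1) := by
        simp [pow_succ', mul_inv_rev, mul_assoc]
      rwa [heq] at h'
  constructor
  · -- D1
    intro σ hσ τ hτ
    rcases (hmemS σ).mp hσ with rfl | rfl | ⟨m, _, rfl⟩
    · exact conjL1 τ hτ
    · exact conjL2 τ hτ
    · have h3' := conjpowR m _ (conjL2 _ (conjpowL m τ hτ))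
      have heq : u₁ ^ m * (u₂⁻¹ * ((u₁ ^ m)⁻¹ * τ * u₁ ^ m) * u₂) * (u₁ ^ m)⁻¹
          = (u₁ ^ m * u₂ * (u₁ ^ m)⁻¹)⁻¹ * τ * (u₁ ^ m * u₂ * (u₁ ^ m)⁻¹) := by
        simp [mul_inv_rev, mul_assoc]
      rwa [heq] at h3'
  · -- D2
    intro x
    by_cases hx0 : x = 0
    · subst hx0
      refine ⟨u₁, ⟨(hmemS u₁).mpr (Or.inl rfl), h1⟩, ?_⟩
      rintro τ ⟨hτS, hτx⟩
      rcases (hmemS τ).mp hτS with rfl | rfl | ⟨m, ⟨hm1, hm2⟩, rfl⟩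
      · rfl
      · exact absurd ((fix2 _).mp hτx) hne01
      · exact absurd ((fixc m _).mp hτx).symm (hp0 m)
    · have hxs : u₁ x ≠ x := fun h => hx0 ((fix1 x).mp h)
      have h1s : u₁ (1 : Fin n) ≠ 1 := Equiv.Perm.mem_support.mp hmem1
      obtain ⟨i, hi⟩ := h1c.exists_pow_eq h1s hxs
      have hmlt : i % (n - 1) < n - 1 := Nat.mod_lt _ (by omega)
      have hmx : (u₁ ^ (i % (n - 1))) 1 = x := by
        rw [← hi]
        exact (hpp _ i).mpr (Nat.mod_modEq i (n - 1))
      by_cases hm0 : i % (n - 1) = 0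
      · have hx1 : x = 1 := by rw [← hmx, hm0]; simp
        subst hx1
        refine ⟨u₂, ⟨(hmemS u₂).mpr (Or.inr (Or.inl rfl)), h2⟩, ?_⟩
        rintro τ ⟨hτS, hτx⟩
        rcases (hmemS τ).mp hτS with rfl | rfl | ⟨m, ⟨hm1, hm2⟩, rfl⟩
        · exact absurd ((fix1 _).mp hτx) hne01.symm
        · rfl
        · exfalso
          have hd := (hpow1 m).mp ((fixc m _).mp hτx).symm
          have := Nat.le_of_dvd (by omega) hd
          omega
      · refine ⟨u₁ ^ (i % (n - 1)) * u₂ * (u₁ ^ (i % (n - 1)))⁻¹,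
          ⟨(hmemS _).mpr (Or.inr (Or.inr ⟨i % (n - 1), ⟨by omega, by omega⟩, rfl⟩)),
           (fixc _ x).mpr hmx.symm⟩, ?_⟩
        rintro τ ⟨hτS, hτx⟩
        rcases (hmemS τ).mp hτS with rfl | rfl | ⟨k, ⟨hk1, hk2⟩, rfl⟩
        · exact absurd ((fix1 _).mp hτx) hx0
        · exfalso
          have hx1 : x = 1 := (fix2 _).mp hτx
          rw [hx1] at hmx
          have hd := (hpow1 _).mp hmx
          have := Nat.le_of_dvd (by omega) hd
          omega
        · have hk : (u₁ ^ k) 1 = (u₁ ^ (i % (n - 1))) 1 := by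
            rw [hmx]; exact ((fixc k x).mp hτx).symm
          have hmod := (hpp _ _).mp hk
          have hkm : k = i % (n - 1) := by
            have h1' : k % (n - 1) = i % (n - 1) % (n - 1) := hmod
            rw [Nat.mod_eq_of_lt (by omega : k < n - 1), Nat.mod_eq_of_lt hmlt] at h1'
            exact h1'
          rw [hkm]
end

section
/- Let Σ ⊆ (S_n)_{n−1} satisfy (D1) and (D2), and write s_x := s^Σ_x for the unique element of Σ fixing x. Then {s₁^m s₂ s₁^{−m} : m = 1,…,n−2} = {s_x : x = 3,…,n} = {s₂^m s₁ s₂^{−m} : m = 1,…,n−2}. In particular, the pair (s₁, s₂) satisfies condition (E2). -/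
lemma stmt14_key {n : ℕ} [NeZero n] (hn : 3 ≤ n)
    (S : Set (Equiv.Perm (Fin n)))
    (hScyc : ∀ σ ∈ S, σ.IsCycle ∧ σ.support.card = n - 1)
    (hD1 : ∀ σ ∈ S, ∀ τ ∈ S, σ⁻¹ * τ * σ ∈ S)
    (hD2 : ∀ x : Fin n, ∃! σ : Equiv.Perm (Fin n), σ ∈ S ∧ σ x = x)
    (f : Fin n → Equiv.Perm (Fin n))
    (hf : ∀ x : Fin n, f x ∈ S ∧ f x x = x)
    (a b : Fin n) (hab : a ≠ b) :
    {σ : Equiv.Perm (Fin n) | ∃ m ∈ Finset.Icc 1 (n - 2), σ = (f a) ^ m * f b * ((f a) ^ m)⁻¹}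
      = f '' {x : Fin n | x ≠ a ∧ x ≠ b} := by
  obtain ⟨haS, haa⟩ := hf a
  obtain ⟨hbS, hbb⟩ := hf b
  obtain ⟨cyc, card⟩ := hScyc _ haS
  have hord : orderOf (f a) = n - 1 := by rw [cyc.orderOf, card]
  have hcompl : (f a).supportᶜ = {a} := by
    have h1 : (f a).supportᶜ.card = 1 := by
      rw [Finset.card_compl, card, Fintype.card_fin]; omega
    obtain ⟨c, hc⟩ := Finset.card_eq_one.mp h1
    have hac : a ∈ (f a).supportᶜ := by
      simp [Equiv.Perm.mem_support, haa]
    rw [hc] at hac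
    simp only [Finset.mem_singleton] at hac
    rw [hc, hac]
  have hmove : ∀ x : Fin n, x ≠ a → f a x ≠ x := by
    intro x hx
    have hxs : x ∈ (f a).support := by
      by_contra h
      have h2 : x ∈ (f a).supportᶜ := Finset.mem_compl.mpr h
      rw [hcompl, Finset.mem_singleton] at h2
      exact hx h2
    exact Equiv.Perm.mem_support.mp hxs
  have hconj : ∀ (k : ℕ) (τ : Equiv.Perm (Fin n)), τ ∈ S → (f a)⁻¹ ^ k * τ * (f a) ^ k ∈ S := by
    intro k
    induction k with
    | zero => intro τ hτ; simpa using hτ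
    | succ k ih =>
      intro τ hτ
      have h := hD1 _ haS _ (ih τ hτ)
      convert h using 1
      group
  have hconj' : ∀ m ∈ Finset.Icc 1 (n-2), (f a) ^ m * f b * ((f a) ^ m)⁻¹ ∈ S := by
    intro m hm
    simp only [Finset.mem_Icc] at hm
    have hpow : (f a) ^ m = (f a)⁻¹ ^ (n - 1 - m) := by
      have h1 : (f a) ^ (n-1) = 1 := by rw [← hord]; exact pow_orderOf_eq_one _
      have h2 : (f a) ^ m * (f a) ^ (n-1-m) = 1 := by
        rw [← pow_add, show m + (n-1-m) = n-1 by omega]; exact h1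
      rw [inv_pow]
      exact eq_inv_of_mul_eq_one_left h2
    rw [hpow]
    have h3 : ((f a)⁻¹ ^ (n-1-m))⁻¹ = (f a) ^ (n-1-m) := by rw [inv_pow, inv_inv]
    rw [h3]
    exact hconj _ _ hbS
  -- uniqueness: any element of S fixing x equals f x
  have huniq : ∀ (σ : Equiv.Perm (Fin n)) (x : Fin n), σ ∈ S → σ x = x → σ = f x := by
    intro σ x hσ hσx
    obtain ⟨τ, _, hu⟩ := hD2 x
    rw [hu σ ⟨hσ, hσx⟩, hu (f x) ⟨(hf x).1, (hf x).2⟩]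
  -- the conjugate fixes (f a)^m b
  have hfixc : ∀ m : ℕ, ((f a) ^ m * f b * ((f a) ^ m)⁻¹) (((f a) ^ m) b) = ((f a) ^ m) b := by
    intro m
    simp [Equiv.Perm.mul_apply, hbb]
  have heq : ∀ m ∈ Finset.Icc 1 (n-2), f (((f a) ^ m) b) = (f a) ^ m * f b * ((f a) ^ m)⁻¹ :=
    fun m hm => (huniq _ _ (hconj' m hm) (hfixc m)).symm
  have hpowa : ∀ m : ℕ, ((f a) ^ m) a = a := by
    intro m
    induction m with
    | zero => simp
    | succ k ih => rw [pow_succ, Equiv.Perm.mul_apply, haa, ih]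
  ext σ
  constructor
  · rintro ⟨m, hm, rfl⟩
    refine ⟨((f a) ^ m) b, ⟨?_, ?_⟩, (heq m hm).symm ▸ rfl⟩
    · intro h
      have := ((f a) ^ m).injective (h.trans (hpowa m).symm)
      exact hab this.symm
    · intro h
      simp only [Finset.mem_Icc] at hm
      have h1 : (f a) ^ m = 1 := (cyc.pow_eq_one_iff' (hmove b hab.symm)).mpr h
      have h2 : n - 1 ∣ m := hord ▸ orderOf_dvd_of_pow_eq_one h1
      have := Nat.le_of_dvd (by omega) h2
      omega
  · rintro ⟨x, ⟨hxa, hxb⟩, rfl⟩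
    have hsc : Equiv.Perm.SameCycle (f a) b x :=
      cyc.sameCycle (hmove b hab.symm) (hmove x hxa)
    obtain ⟨i, hi, hix⟩ := hsc.exists_pow_eq'
    rw [hord] at hi
    have hi0 : i ≠ 0 := by
      rintro rfl
      simp at hix
      exact hxb hix.symm
    have him : i ∈ Finset.Icc 1 (n-2) := Finset.mem_Icc.mpr ⟨by omega, by omega⟩
    exact ⟨i, him, by rw [← heq i him, hix]⟩

/-- for `S ⊆ (S_n)_{n−1}` satisfying (D1),(D2), with `s_x := f x`
the unique element of `S` fixing `x` (points `1,2,…,n` labelled by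
`0,1,…,n−1 : Fin n`), one has
`{s₁^m s₂ s₁^{−m} : m = 1,…,n−2} = {s_x : x = 3,…,n} = {s₂^m s₁ s₂^{−m} : m = 1,…,n−2}`;
in particular `(s₁, s₂)` satisfies (E2). -/
theorem stmt_14 (n : ℕ) [NeZero n] (hn : 3 ≤ n)
    (S : Set (Equiv.Perm (Fin n)))
    (hScyc : ∀ σ ∈ S, σ.IsCycle ∧ σ.support.card = n - 1)
    (hD1 : ∀ σ ∈ S, ∀ τ ∈ S, σ⁻¹ * τ * σ ∈ S)
    (hD2 : ∀ x : Fin n, ∃! σ : Equiv.Perm (Fin n), σ ∈ S ∧ σ x = x)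
    (f : Fin n → Equiv.Perm (Fin n))
    (hf : ∀ x : Fin n, f x ∈ S ∧ f x x = x) :
    ({σ : Equiv.Perm (Fin n) | ∃ m ∈ Finset.Icc 1 (n - 2), σ = (f 0) ^ m * f 1 * ((f 0) ^ m)⁻¹}
       = f '' {x : Fin n | 2 ≤ (x : ℕ)}) ∧
    ({σ : Equiv.Perm (Fin n) | ∃ m ∈ Finset.Icc 1 (n - 2), σ = (f 1) ^ m * f 0 * ((f 1) ^ m)⁻¹}
       = f '' {x : Fin n | 2 ≤ (x : ℕ)}) := by
  have hv1 : ((1 : Fin n) : ℕ) = 1 := by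
    have h := Fin.val_one' n
    rw [h, Nat.mod_eq_of_lt (by omega)]
  have h01 : (0 : Fin n) ≠ 1 := by
    intro h
    have := congrArg Fin.val h
    rw [Fin.val_zero, hv1] at this
    omega
  have hset : ∀ c d : Fin n, c = 0 → d = 1 →
      {x : Fin n | x ≠ c ∧ x ≠ d} = {x : Fin n | 2 ≤ (x : ℕ)} := by
    rintro c d rfl rfl
    ext x
    simp only [Set.mem_setOf_eq, Ne, Fin.ext_iff, Fin.val_zero, hv1]
    have := x.isLt
    omega
  constructor
  · rw [stmt14_key hn S hScyc hD1 hD2 f hf 0 1 h01, hset 0 1 rfl rfl]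
  · rw [stmt14_key hn S hScyc hD1 hD2 f hf 1 0 h01.symm]
    rw [show {x : Fin n | x ≠ 1 ∧ x ≠ 0} = {x : Fin n | x ≠ 0 ∧ x ≠ 1} from
      Set.ext fun x => and_comm, hset 0 1 rfl rfl]
end

section
/- Let s₁ := (2 3 ⋯ n) ∈ S_n, and let s₂ be an (n−1)-cycle with s₂(2)=2 satisfying (F2): {s₂^m s₁ s₂^{−m} : m=1,…,n−2} = {s₁^m s₂ s₁^{−m} : m=1,…,n−2}. If m ∈ ℤ satisfies s₂(1) = s₁^m(2), then s₁^m s₂ s₁^{−m} = s₂ s₁ s₂⁻¹. -/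
/-- Lemma 4.6: points `1,…,n` are labelled by `0,…,n−1 : Fin n`;
`s₁` is the cycle `(2 3 ⋯ n)`, i.e. it fixes `0` and sends `i ↦ i+1` on
`1,…,n−2` and `n−1 ↦ 1`. If `s₂` is an (n−1)-cycle fixing `1` (the point `2`)
satisfying (F2), and `m : ℤ` satisfies `s₂ 0 = s₁^m 1`, then
`s₁^m s₂ s₁^{−m} = s₂ s₁ s₂⁻¹`. -/
theorem stmt_15 (n : ℕ) [NeZero n] (hn : 3 ≤ n)
    (s₁ s₂ : Equiv.Perm (Fin n))
    (hs₁ : ∀ i : Fin n, s₁ i = if i = 0 then 0 else if (i : ℕ) = n - 1 then 1 else i + 1)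
    (h2c : s₂.IsCycle) (h2card : s₂.support.card = n - 1)
    (hF1 : s₂ 1 = 1)
    (hF2 : {σ : Equiv.Perm (Fin n) | ∃ m ∈ Finset.Icc 1 (n - 2), σ = s₂ ^ m * s₁ * (s₂ ^ m)⁻¹}
         = {σ : Equiv.Perm (Fin n) | ∃ m ∈ Finset.Icc 1 (n - 2), σ = s₁ ^ m * s₂ * (s₁ ^ m)⁻¹})
    (m : ℤ) (hm : s₂ 0 = (s₁ ^ m) 1) :
    s₁ ^ m * s₂ * (s₁ ^ m)⁻¹ = s₂ * s₁ * s₂⁻¹ := by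
  have hn0 : 0 < n := by omega
  have hv1 : ((1 : Fin n) : ℕ) = 1 := by
    rw [Fin.val_one', Nat.mod_eq_of_lt (by omega)]
  have hs₁0 : s₁ 0 = 0 := by rw [hs₁]; simp
  -- orbit of 1 under powers of s₁
  have horb : ∀ j : ℕ, ∀ _hj : j + 1 ≤ n - 1, (s₁ ^ j) 1 = (⟨j + 1, by omega⟩ : Fin n) := by
    intro j
    induction j with
    | zero => intro _; apply Fin.ext; simpa using hv1
    | succ j ih =>
      intro hj
      have hj' : j + 1 ≤ n - 1 := by omega
      rw [pow_succ', Equiv.Perm.mul_apply, ih hj', hs₁]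
      have h0 : (⟨j + 1, by omega⟩ : Fin n) ≠ 0 := by
        simp [Fin.ext_iff]
      rw [if_neg h0, if_neg (by show ¬(j + 1) = n - 1; omega)]
      apply Fin.ext
      rw [Fin.val_add, hv1]
      show (j + 1 + 1) % n = j + 2
      rw [Nat.mod_eq_of_lt (by omega)]
  have hs₁1 : s₁ 1 ≠ 1 := by
    have := horb 1 (by omega)
    rw [pow_one] at this
    rw [this]
    simp only [ne_eq, Fin.ext_iff, hv1]
    omega
  -- s₁ is a cycle
  have hc1 : s₁.IsCycle := by
    refine ⟨1, hs₁1, fun y hy => ?_⟩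
    have hy0 : y ≠ 0 := by
      intro h; rw [h, hs₁0] at hy; exact hy rfl
    have hyv : 1 ≤ (y : ℕ) := by
      rcases Nat.eq_zero_or_pos (y : ℕ) with h | h
      · exact absurd (Fin.ext h) hy0
      · exact h
    refine ⟨((y : ℕ) - 1 : ℕ), ?_⟩
    rw [zpow_natCast, horb _ (by omega : ((y : ℕ) - 1) + 1 ≤ n - 1)]
    · apply Fin.ext
      show (y : ℕ) - 1 + 1 = (y : ℕ)
      omega
  -- s₂ s₁ s₂⁻¹ is in the left set, hence equals some s₁^k s₂ s₁^{-k}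
  have hmem : s₂ * s₁ * s₂⁻¹ ∈
      {σ : Equiv.Perm (Fin n) | ∃ m ∈ Finset.Icc 1 (n - 2), σ = s₂ ^ m * s₁ * (s₂ ^ m)⁻¹} := by
    exact ⟨1, by simp [Finset.mem_Icc]; omega, by simp⟩
  rw [hF2] at hmem
  obtain ⟨k, hk, hkeq⟩ := hmem
  set σ := s₁ ^ k * s₂ * (s₁ ^ k)⁻¹ with hσ
  -- σ fixes both s₁^k 1 and s₂ 0
  have fix1 : σ ((s₁ ^ k) 1) = (s₁ ^ k) 1 := by
    simp [hσ, Equiv.Perm.mul_apply, hF1]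
  have fix2 : σ (s₂ 0) = s₂ 0 := by
    rw [← hkeq]
    simp [Equiv.Perm.mul_apply, hs₁0]
  -- σ has exactly one fixed point
  have hcard : σ.support.card = n - 1 := by
    rw [hσ, Equiv.Perm.card_support_conj, h2card]
  have hcompl : σ.supportᶜ.card ≤ 1 := by
    have := Finset.card_compl σ.support
    rw [hcard] at this
    simp only [Fintype.card_fin] at this
    omega
  have hkey : s₂ 0 = (s₁ ^ k) 1 := by
    have h1 : s₂ 0 ∈ σ.supportᶜ := by
      simp [Equiv.Perm.mem_support, fix2]
    have h2 : (s₁ ^ k) 1 ∈ σ.supportᶜ := by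
      simp [Equiv.Perm.mem_support, fix1]
    exact Finset.card_le_one.mp hcompl _ h1 _ h2
  -- hence s₁^m 1 = s₁^k 1, so s₁^(m-k) fixes 1, so s₁^(m-k) = 1
  have heq1 : (s₁ ^ (m - (k : ℤ))) 1 = 1 := by
    have h : (s₁ ^ m) 1 = (s₁ ^ (k : ℤ)) 1 := by
      rw [← hm, hkey, zpow_natCast]
    have : (s₁ ^ (-(k : ℤ) + m)) 1 = 1 := by
      rw [zpow_add, Equiv.Perm.mul_apply, h, ← Equiv.Perm.mul_apply, ← zpow_add]
      simp
    rwa [show m - (k : ℤ) = -(k : ℤ) + m by ring]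
  have hpow1 : s₁ ^ (m - (k : ℤ)) = 1 := by
    set o : ℕ := orderOf s₁ with ho
    have hopos : 0 < o := orderOf_pos s₁
    have hmod : s₁ ^ (m - (k : ℤ)) = s₁ ^ ((m - (k : ℤ)) % (o : ℤ)).toNat := by
      rw [← zpow_natCast, Int.toNat_of_nonneg (Int.emod_nonneg _ (by positivity)),
        zpow_mod_orderOf]
    rw [hmod] at heq1 ⊢
    exact (hc1.pow_eq_one_iff' hs₁1).mpr heq1
  have hfin : s₁ ^ m = s₁ ^ k := by
    have : s₁ ^ m = s₁ ^ (m - (k : ℤ)) * s₁ ^ (k : ℤ) := by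
      rw [← zpow_add]; ring_nf
    rw [this, hpow1, one_mul, zpow_natCast]
  rw [hfin]
  exact hkeq.symm
end

section
/- Let s₁ := (2 3 ⋯ n) and let s₂ ∈ F_n. Define φ(s₂) : {1,…,n} → S_n by φ(s₂)_1 = s₁, φ(s₂)_2 = s₂, and φ(s₂)_i = s₁^{i−2} s₂ s₁^{−(i−2)} for 3 ≤ i ≤ n. Then φ(s₂) is a quandle structure of cyclic type on {1,…,n}: each φ(s₂)_i is an (n−1)-cycle fixing i, and φ(s₂)_i ∘ φ(s₂)_j ∘ φ(s₂)_i⁻¹ = φ(s₂)_{φ(s₂)_i(j)} for all i, j. -/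
private lemma s1_pow_val {n : ℕ} [NeZero n] (hn : 3 ≤ n) (s₁ : Equiv.Perm (Fin n))
    (hs₁ : ∀ i : Fin n, s₁ i = if i = 0 then 0 else if (i : ℕ) = n - 1 then 1 else i + 1) :
    ∀ (m : ℕ) (x : Fin n), x ≠ 0 → ((s₁ ^ m) x : ℕ) = ((x : ℕ) - 1 + m) % (n - 1) + 1 := by
  intro m
  induction m with
  | zero =>
    intro x hx
    have hx0 : (x : ℕ) ≠ 0 := fun h => hx (Fin.ext (by rw [h, Fin.val_zero]))
    have hlt : (x : ℕ) < n := x.isLt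
    simp only [pow_zero, Equiv.Perm.coe_one, id_eq, Nat.add_zero]
    rw [Nat.mod_eq_of_lt (by omega)]
    omega
  | succ m ih =>
    intro x hx
    have hx0 : (x : ℕ) ≠ 0 := fun h => hx (Fin.ext (by rw [h, Fin.val_zero]))
    rw [pow_succ', Equiv.Perm.mul_apply]
    have hyval : (((s₁ ^ m) x : Fin n) : ℕ) = ((x : ℕ) - 1 + m) % (n - 1) + 1 := ih x hx
    have hrlt : ((x : ℕ) - 1 + m) % (n - 1) < n - 1 := Nat.mod_lt _ (by omega)
    have hy0 : (s₁ ^ m) x ≠ 0 := by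
      intro h; rw [h, Fin.val_zero] at hyval; omega
    have hmodsucc : ((x : ℕ) - 1 + (m + 1)) % (n - 1)
        = (((x : ℕ) - 1 + m) % (n - 1) + 1) % (n - 1) := by
      rw [show (x : ℕ) - 1 + (m + 1) = ((x : ℕ) - 1 + m) + 1 by omega, Nat.add_mod,
        Nat.mod_eq_of_lt (show 1 < n - 1 by omega)]
    rw [hs₁, if_neg hy0]
    by_cases hcase : (((s₁ ^ m) x : Fin n) : ℕ) = n - 1
    · rw [if_pos hcase]
      have h0 : ((x : ℕ) - 1 + (m + 1)) % (n - 1) = 0 := by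
        rw [hmodsucc, show ((x : ℕ) - 1 + m) % (n - 1) = n - 2 by omega,
          show n - 2 + 1 = n - 1 by omega, Nat.mod_self]
      rw [h0, Fin.val_one', Nat.mod_eq_of_lt (by omega)]
    · rw [if_neg hcase]
      have h1 : ((x : ℕ) - 1 + (m + 1)) % (n - 1) = ((x : ℕ) - 1 + m) % (n - 1) + 1 := by
        rw [hmodsucc]; exact Nat.mod_eq_of_lt (by omega)
      have hadd : (((s₁ ^ m) x + 1 : Fin n) : ℕ) = (((s₁ ^ m) x : Fin n) : ℕ) + 1 := by
        rw [Fin.val_add, Fin.val_one', Nat.mod_eq_of_lt (show 1 < n by omega),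
          Nat.mod_eq_of_lt (by omega)]
      rw [hadd, h1]
      omega

/-- Theorem 4.4: points `1,…,n` of the paper are labelled
`0,…,n−1 : Fin n`. Let `s₁ = (2 3 ⋯ n)` (fixing `0`, sending `i ↦ i+1` for
`1 ≤ i ≤ n−2` and `n−1 ↦ 1`) and let `s₂ ∈ F_n`, i.e. `s₂` is an (n−1)-cycle
with (F1) `s₂ 1 = 1` and (F2). Define `φ 0 = s₁`, `φ 1 = s₂`, and
`φ k = s₁^{k−1} s₂ s₁^{−(k−1)}` for `k ≥ 2` (paper: `φ_i = s₁^{i−2} s₂ s₁^{−(i−2)}`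
for `3 ≤ i ≤ n`). Then `φ` is a quandle structure of cyclic type: each `φ i` is
an (n−1)-cycle fixing `i`, and `φ i ∘ φ j ∘ (φ i)⁻¹ = φ (φ i j)`. -/
theorem stmt_19 (n : ℕ) [NeZero n] (hn : 3 ≤ n)
    (s₁ s₂ : Equiv.Perm (Fin n))
    (hs₁ : ∀ i : Fin n, s₁ i = if i = 0 then 0 else if (i : ℕ) = n - 1 then 1 else i + 1)
    (h2c : s₂.IsCycle) (h2card : s₂.support.card = n - 1)
    (hF1 : s₂ 1 = 1)
    (hF2 : {σ : Equiv.Perm (Fin n) | ∃ m ∈ Finset.Icc 1 (n - 2), σ = s₂ ^ m * s₁ * (s₂ ^ m)⁻¹}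
         = {σ : Equiv.Perm (Fin n) | ∃ m ∈ Finset.Icc 1 (n - 2), σ = s₁ ^ m * s₂ * (s₁ ^ m)⁻¹})
    (φ : Fin n → Equiv.Perm (Fin n))
    (hφ0 : φ 0 = s₁) (hφ1 : φ 1 = s₂)
    (hφ : ∀ k : Fin n, 2 ≤ (k : ℕ) →
      φ k = s₁ ^ ((k : ℕ) - 1) * s₂ * (s₁ ^ ((k : ℕ) - 1))⁻¹) :
    (∀ i : Fin n, (φ i).IsCycle ∧ (φ i).support.card = n - 1 ∧ φ i i = i) ∧
    (∀ i j : Fin n, φ i * φ j * (φ i)⁻¹ = φ (φ i j)) := by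
  have hval1 : ((1 : Fin n) : ℕ) = 1 := by
    rw [Fin.val_one']; exact Nat.mod_eq_of_lt (by omega)
  have h10 : (1 : Fin n) ≠ 0 := by
    intro h
    have h' := congrArg Fin.val h
    rw [hval1, Fin.val_zero] at h'
    omega
  have hs10 : s₁ 0 = 0 := by rw [hs₁]; simp
  have hpow := s1_pow_val hn s₁ hs₁
  have hpow0 : ∀ m : ℕ, (s₁ ^ m) 0 = 0 := by
    intro m
    induction m with
    | zero => simp
    | succ m ih => rw [pow_succ, Equiv.Perm.mul_apply, hs10, ih]
  have hs1_one : ∀ m : ℕ, m ≤ n - 2 → (((s₁ ^ m) 1 : Fin n) : ℕ) = m + 1 := by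
    intro m hm
    rw [hpow m 1 h10, hval1]
    simp only [Nat.sub_self, Nat.zero_add]
    rw [Nat.mod_eq_of_lt (by omega)]
  have hs1pow_one_eq : ∀ k : Fin n, k ≠ 0 → (s₁ ^ ((k : ℕ) - 1)) 1 = k := by
    intro k hk
    have hk0 : (k : ℕ) ≠ 0 := fun h => hk (Fin.ext (by rw [h, Fin.val_zero]))
    have hlt : (k : ℕ) < n := k.isLt
    apply Fin.ext
    rw [hs1_one _ (by omega)]
    omega
  have hs1_ord : s₁ ^ (n - 1) = 1 := by
    apply Equiv.ext
    intro x
    by_cases hx : x = 0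
    · rw [hx, hpow0]; rfl
    · have hx0 : (x : ℕ) ≠ 0 := fun h => hx (Fin.ext (by rw [h, Fin.val_zero]))
      have hlt : (x : ℕ) < n := x.isLt
      apply Fin.ext
      rw [hpow _ x hx, Nat.add_mod_right, Nat.mod_eq_of_lt (by omega)]
      simp only [Equiv.Perm.coe_one, id_eq]
      omega
  have hs1_fix : ∀ x : Fin n, s₁ x = x ↔ x = 0 := by
    intro x
    constructor
    · intro h
      by_contra hx
      have hx0 : (x : ℕ) ≠ 0 := fun h => hx (Fin.ext (by rw [h, Fin.val_zero]))
      have hlt : (x : ℕ) < n := x.isLt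
      have h1 := hpow 1 x hx
      rw [pow_one, h, Nat.sub_add_cancel (by omega)] at h1
      by_cases hxtop : (x : ℕ) = n - 1
      · rw [hxtop, Nat.mod_self] at h1; omega
      · rw [Nat.mod_eq_of_lt (by omega)] at h1; omega
    · intro h; rw [h, hs10]
  have hsupp1 : s₁.support = {(0 : Fin n)}ᶜ := by
    ext x
    simp [Equiv.Perm.mem_support, hs1_fix x]
  have hcard1 : s₁.support.card = n - 1 := by
    rw [hsupp1, Finset.card_compl, Finset.card_singleton, Fintype.card_fin]
  have hcyc1 : s₁.IsCycle := by
    refine ⟨1, ?_, ?_⟩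
    · intro h; exact h10 ((hs1_fix 1).mp h)
    · intro y hy
      have hy0 : y ≠ 0 := fun h => hy (by rw [h, hs10])
      exact ⟨(((y : ℕ) - 1 : ℕ) : ℤ), by rw [zpow_natCast]; exact hs1pow_one_eq y hy0⟩
  have hs2_ord : s₂ ^ (n - 1) = 1 := by
    have ho := h2c.orderOf
    rw [h2card] at ho
    rw [← ho]
    exact pow_orderOf_eq_one s₂
  have huniq : ∀ σ : Equiv.Perm (Fin n), σ.support.card = n - 1 →
      ∀ p x : Fin n, σ p = p → σ x = x → x = p := by
    intro σ hσ p x hp hx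
    have hcc : σ.supportᶜ.card = 1 := by
      rw [Finset.card_compl, hσ, Fintype.card_fin]; omega
    obtain ⟨a, ha⟩ := Finset.card_eq_one.mp hcc
    have hpmem : p ∈ σ.supportᶜ := by
      simp [Equiv.Perm.mem_support, hp]
    have hxmem : x ∈ σ.supportᶜ := by
      simp [Equiv.Perm.mem_support, hx]
    rw [ha, Finset.mem_singleton] at hpmem hxmem
    rw [hpmem, hxmem]
  have hφne : ∀ k : Fin n, k ≠ 0 → φ k = s₁ ^ ((k : ℕ) - 1) * s₂ * (s₁ ^ ((k : ℕ) - 1))⁻¹ := by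
    intro k hk
    have hk0 : (k : ℕ) ≠ 0 := fun h => hk (Fin.ext (by rw [h, Fin.val_zero]))
    rcases Nat.lt_or_ge (k : ℕ) 2 with h | h
    · have hk1 : (k : ℕ) = 1 := by omega
      have hke : k = 1 := Fin.ext (by rw [hk1, hval1])
      rw [hke, hφ1, hval1]
      simp
    · exact hφ k h
  have hφcyc : ∀ k : Fin n, (φ k).IsCycle ∧ (φ k).support.card = n - 1 ∧ φ k k = k := by
    intro k
    by_cases hk : k = 0
    · rw [hk, hφ0]; exact ⟨hcyc1, hcard1, hs10⟩
    · rw [hφne k hk]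
      refine ⟨h2c.conj, ?_, ?_⟩
      · rw [Equiv.Perm.support_conj, Finset.card_map, h2card]
      · have h1k := hs1pow_one_eq k hk
        have hinv : (s₁ ^ ((k : ℕ) - 1))⁻¹ k = 1 := by
          rw [Equiv.Perm.inv_def, Equiv.symm_apply_eq]
          exact h1k.symm
        rw [Equiv.Perm.mul_apply, Equiv.Perm.mul_apply, hinv, hF1, h1k]
  have hE1 : ∀ j : Fin n, φ (s₁ j) = s₁ * φ j * s₁⁻¹ := by
    intro j
    by_cases hj : j = 0
    · rw [hj, hs10, hφ0]; group
    · have hj0 : (j : ℕ) ≠ 0 := fun h => hj (Fin.ext (by rw [h, Fin.val_zero]))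
      have hlt : (j : ℕ) < n := j.isLt
      by_cases hjtop : (j : ℕ) = n - 1
      · have hs1j : s₁ j = 1 := by rw [hs₁, if_neg hj, if_pos hjtop]
        rw [hs1j, hφ1, hφne j hj, hjtop]
        have hcomb : s₁ * s₁ ^ (n - 2) = s₁ ^ (n - 1) := by
          rw [← pow_succ']; congr 1; omega
        have : s₁ * (s₁ ^ (n - 1 - 1) * s₂ * (s₁ ^ (n - 1 - 1))⁻¹) * s₁⁻¹
            = (s₁ * s₁ ^ (n - 2)) * s₂ * (s₁ * s₁ ^ (n - 2))⁻¹ := by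
          rw [show n - 1 - 1 = n - 2 by omega]; group
        rw [this, hcomb, hs1_ord]; group
      · have hval : ((s₁ j : Fin n) : ℕ) = (j : ℕ) + 1 := by
          rw [hs₁, if_neg hj, if_neg hjtop, Fin.val_add, Fin.val_one',
            Nat.mod_eq_of_lt (show 1 < n by omega), Nat.mod_eq_of_lt (by omega)]
        have hne : s₁ j ≠ 0 := by
          intro h; rw [h] at hval; simp at hval
        rw [hφne _ hne, hφne j hj, hval,
          show (j : ℕ) + 1 - 1 = ((j : ℕ) - 1) + 1 by omega, pow_succ']
        group
  have hE1pow : ∀ (m : ℕ) (j : Fin n), φ ((s₁ ^ m) j) = s₁ ^ m * φ j * (s₁ ^ m)⁻¹ := by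
    intro m
    induction m with
    | zero => intro j; simp
    | succ m ih =>
      intro j
      rw [pow_succ', Equiv.Perm.mul_apply, hE1, ih]
      group
  have hE1inv : ∀ (m : ℕ) (j : Fin n), φ ((s₁ ^ m)⁻¹ j) = (s₁ ^ m)⁻¹ * φ j * s₁ ^ m := by
    intro m j
    have h := hE1pow m ((s₁ ^ m)⁻¹ j)
    rw [show (s₁ ^ m) ((s₁ ^ m)⁻¹ j) = j from (s₁ ^ m).apply_symm_apply j] at h
    rw [h]; group
  have hmemφ : ∀ m : ℕ, m ∈ Finset.Icc 1 (n - 2) →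
      s₁ ^ m * s₂ * (s₁ ^ m)⁻¹ ∈ Set.range φ := by
    intro m hm
    rw [Finset.mem_Icc] at hm
    have hlt : m + 1 < n := by omega
    refine ⟨⟨m + 1, hlt⟩, ?_⟩
    rw [hφne ⟨m + 1, hlt⟩ (by simp [Fin.ext_iff])]
    simp
  have hE2r : ∀ j : Fin n, s₂ * φ j * s₂⁻¹ ∈ Set.range φ := by
    intro j
    by_cases hj1 : j = 1
    · exact ⟨1, by rw [hj1, hφ1]; group⟩
    by_cases hj0 : j = 0
    · rw [hj0, hφ0]
      have h1mem : s₂ ^ 1 * s₁ * (s₂ ^ 1)⁻¹ ∈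
          {σ : Equiv.Perm (Fin n) | ∃ m ∈ Finset.Icc 1 (n - 2), σ = s₂ ^ m * s₁ * (s₂ ^ m)⁻¹} :=
        ⟨1, by rw [Finset.mem_Icc]; omega, rfl⟩
      rw [hF2] at h1mem
      obtain ⟨m, hm, heq⟩ := h1mem
      rw [pow_one] at heq
      rw [heq]
      exact hmemφ m hm
    · have hjv0 : (j : ℕ) ≠ 0 := fun h => hj0 (Fin.ext (by rw [h, Fin.val_zero]))
      have hjv1 : (j : ℕ) ≠ 1 := by
        intro h; exact hj1 (Fin.ext (by rw [h, hval1]))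
      have hlt : (j : ℕ) < n := j.isLt
      rw [hφne j hj0]
      have hmem : s₁ ^ ((j : ℕ) - 1) * s₂ * (s₁ ^ ((j : ℕ) - 1))⁻¹ ∈
          {σ : Equiv.Perm (Fin n) | ∃ m ∈ Finset.Icc 1 (n - 2), σ = s₁ ^ m * s₂ * (s₁ ^ m)⁻¹} :=
        ⟨(j : ℕ) - 1, by rw [Finset.mem_Icc]; omega, rfl⟩
      rw [← hF2] at hmem
      obtain ⟨m, hm, heq⟩ := hmem
      rw [Finset.mem_Icc] at hm
      rw [heq]
      by_cases hmtop : m = n - 2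
      · have hc : s₂ * s₂ ^ (n - 2) = s₂ ^ (n - 1) := by
          rw [← pow_succ']; congr 1; omega
        have hre : s₂ * (s₂ ^ m * s₁ * (s₂ ^ m)⁻¹) * s₂⁻¹
            = (s₂ * s₂ ^ (n - 2)) * s₁ * (s₂ * s₂ ^ (n - 2))⁻¹ := by
          rw [hmtop]; group
        rw [hre, hc, hs2_ord]
        exact ⟨0, by rw [hφ0]; group⟩
      · have hmem2 : s₂ ^ (m + 1) * s₁ * (s₂ ^ (m + 1))⁻¹ ∈
            {σ : Equiv.Perm (Fin n) | ∃ m ∈ Finset.Icc 1 (n - 2), σ = s₂ ^ m * s₁ * (s₂ ^ m)⁻¹} :=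
          ⟨m + 1, by rw [Finset.mem_Icc]; omega, rfl⟩
        rw [hF2] at hmem2
        obtain ⟨m', hm', heq'⟩ := hmem2
        have hgoal : s₂ * (s₂ ^ m * s₁ * (s₂ ^ m)⁻¹) * s₂⁻¹
            = s₂ ^ (m + 1) * s₁ * (s₂ ^ (m + 1))⁻¹ := by
          rw [pow_succ']; group
        rw [hgoal, heq']
        exact hmemφ m' hm'
  have hE2 : ∀ j : Fin n, φ (s₂ j) = s₂ * φ j * s₂⁻¹ := by
    intro j
    obtain ⟨k, hk⟩ := hE2r j
    obtain ⟨-, -, hjfix⟩ := hφcyc j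
    obtain ⟨-, hkcard, hkfix⟩ := hφcyc k
    have hfix2 : (s₂ * φ j * s₂⁻¹) (s₂ j) = s₂ j := by
      rw [Equiv.Perm.mul_apply, Equiv.Perm.mul_apply, show s₂⁻¹ (s₂ j) = j from s₂.symm_apply_apply j, hjfix]
    rw [← hk] at hfix2
    have hkey := huniq (φ k) hkcard k (s₂ j) hkfix hfix2
    rw [hkey, hk]
  refine ⟨fun i => hφcyc i, fun i j => ?_⟩
  by_cases hi : i = 0
  · rw [hi, hφ0]
    exact (hE1 j).symm
  · rw [hφne i hi]
    set a := (i : ℕ) - 1 with ha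
    have happ : (s₁ ^ a * s₂ * (s₁ ^ a)⁻¹) j = (s₁ ^ a) (s₂ ((s₁ ^ a)⁻¹ j)) := by
      simp [Equiv.Perm.mul_apply]
    rw [happ, hE1pow, hE2, hE1inv]
    group
end
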